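/- An exact category E is idempotent complete (every idempotent splits) if and only if every acyclic complex over E is exact, where a complex is acyclic if it is homotopy equivalent to an exact complex. -/

import Mathlib

open CategoryTheory CategoryTheory.Limits ZeroObject

universe v u

/-- The data of a class of "admissible triples" on a category: a predicate on composable
pairs of morphisms `X ⟶ Y ⟶ Z`. -/
structure ExData (C : Type u) [Category.{v} C] where
  adm : ∀ ⦃X Y Z : C⦄, (X ⟶ Y) → (Y ⟶ Z) → Prop

namespace ExData

variable {C : Type u} [Category.{v} C] [Preadditive C]

/-- A morphism is an admissible monomorphism if it is the first map of an admissible triple. -/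
def AdmMono (E : ExData C) {X Y : C} (f : X ⟶ Y) : Prop := ∃ (Z : C) (g : Y ⟶ Z), E.adm f g

/-- A morphism is an admissible epimorphism if it is the second map of an admissible triple. -/
def AdmEpi (E : ExData C) {Y Z : C} (g : Y ⟶ Z) : Prop := ∃ (X : C) (f : X ⟶ Y), E.adm f g

/-- Axiom Ex0: the zero triple is admissible and the class of admissible triples is closed
under isomorphism of triples. -/
def Ex0 [HasZeroObject C] (E : ExData C) : Prop :=
  E.adm (𝟙 (0 : C)) (𝟙 (0 : C)) ∧
  ∀ ⦃X Y Z X' Y' Z' : C⦄ (f : X ⟶ Y) (g : Y ⟶ Z) (f' : X' ⟶ Y') (g' : Y' ⟶ Z')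
    (a : X ≅ X') (b : Y ≅ Y') (c : Z ≅ Z'),
    E.adm f g → f ≫ b.hom = a.hom ≫ f' → g ≫ c.hom = b.hom ≫ g' → E.adm f' g'

/-- Axiom Ex1: in an admissible triple `X ⟶ Y ⟶ Z` the two morphisms are each other's
kernel and cokernel. -/
def Ex1 (E : ExData C) : Prop :=
  ∀ ⦃X Y Z : C⦄ (f : X ⟶ Y) (g : Y ⟶ Z), E.adm f g →
    f ≫ g = 0 ∧
    (∀ ⦃T : C⦄ (h : T ⟶ Y), h ≫ g = 0 → ∃! k : T ⟶ X, k ≫ f = h) ∧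
    (∀ ⦃T : C⦄ (h : Y ⟶ T), f ≫ h = 0 → ∃! k : Z ⟶ T, g ≫ k = h)

/-- Axiom Ex2(a): pushout of an admissible triple along a morphism out of its first term. -/
def Ex2a (E : ExData C) : Prop :=
  ∀ ⦃X' X X'' Y' : C⦄ (f : X' ⟶ X) (g : X ⟶ X''), E.adm f g → ∀ (t : X' ⟶ Y'),
    ∃ (Y : C) (i : Y' ⟶ Y) (u : X ⟶ Y) (g' : Y ⟶ X''),
      E.adm i g' ∧ t ≫ i = f ≫ u ∧ u ≫ g' = g

/-- Axiom Ex2(b): pullback of an admissible triple along a morphism into its last term. -/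
def Ex2b (E : ExData C) : Prop :=
  ∀ ⦃X' X X'' Y'' : C⦄ (f : X' ⟶ X) (g : X ⟶ X''), E.adm f g → ∀ (t : Y'' ⟶ X''),
    ∃ (Y : C) (f' : X' ⟶ Y) (u : Y ⟶ X) (g' : Y ⟶ Y''),
      E.adm f' g' ∧ f' ≫ u = f ∧ u ≫ g = g' ≫ t

/-- Axiom Ex3(a): the composition of two admissible monomorphisms is an admissible
monomorphism. -/
def Ex3a (E : ExData C) : Prop :=
  ∀ ⦃X Y Z : C⦄ (f : X ⟶ Y) (g : Y ⟶ Z), E.AdmMono f → E.AdmMono g → E.AdmMono (f ≫ g)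

/-- Axiom Ex3(b): the composition of two admissible epimorphisms is an admissible
epimorphism. -/
def Ex3b (E : ExData C) : Prop :=
  ∀ ⦃X Y Z : C⦄ (f : X ⟶ Y) (g : Y ⟶ Z), E.AdmEpi f → E.AdmEpi g → E.AdmEpi (f ≫ g)

/-- The full set of exact category axioms Ex0–Ex3. -/
structure IsExact [HasZeroObject C] (E : ExData C) : Prop where
  ex0 : E.Ex0
  ex1 : E.Ex1
  ex2a : E.Ex2a
  ex2b : E.Ex2b
  ex3a : E.Ex3a
  ex3b : E.Ex3b

end ExData

variable {C : Type u} [Category.{v} C] [Preadditive C] [HasZeroObject C]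

/-- A complex over an exact category is exact if its differentials factor as
admissible epimorphisms followed by admissible monomorphisms through a sequence of
admissible triples `Z^i → X^i → Z^{i+1}`. -/
def IsExactCpx (E : ExData C) (K : CochainComplex C ℤ) : Prop :=
  ∃ (Z : ℤ → C) (p : ∀ i : ℤ, K.X i ⟶ Z (i + 1)) (j : ∀ i : ℤ, Z i ⟶ K.X i),
    (∀ i : ℤ, E.adm (j i) (p i)) ∧ ∀ i : ℤ, K.d i (i + 1) = p i ≫ j (i + 1)

/-- A complex is acyclic if it is homotopy equivalent to an exact complex. -/
def IsAcyclicCpx (E : ExData C) (K : CochainComplex C ℤ) : Prop :=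
  ∃ L : CochainComplex C ℤ, IsExactCpx E L ∧ Nonempty (HomotopyEquiv K L)

/-- Bounded above complexes: `K.X i = 0` for `i ≫ 0`. -/
def CpxBddAbove (K : CochainComplex C ℤ) : Prop :=
  ∃ n : ℤ, ∀ i : ℤ, n ≤ i → IsZero (K.X i)

/-- Bounded below complexes: `K.X i = 0` for `i ≪ 0`. -/
def CpxBddBelow (K : CochainComplex C ℤ) : Prop :=
  ∃ n : ℤ, ∀ i : ℤ, i ≤ n → IsZero (K.X i)

set_option linter.unusedSectionVars false
namespace ExAux

variable {C : Type u} [Category.{v} C] [Preadditive C] [HasZeroObject C]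
variable {E : ExData C}

/-- `f` is a kernel of `g` (universal property form). -/
def IsKer {X Y Z : C} (f : X ⟶ Y) (g : Y ⟶ Z) : Prop :=
  ∀ ⦃T : C⦄ (h : T ⟶ Y), h ≫ g = 0 → ∃! k : T ⟶ X, k ≫ f = h

/-- `g` is a cokernel of `f` (universal property form). -/
def IsCoker {X Y Z : C} (f : X ⟶ Y) (g : Y ⟶ Z) : Prop :=
  ∀ ⦃T : C⦄ (h : Y ⟶ T), f ≫ h = 0 → ∃! k : Z ⟶ T, g ≫ k = h

lemma adm_zero (hE : E.IsExact) {X Y Z : C} {f : X ⟶ Y} {g : Y ⟶ Z} (h : E.adm f g) :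
    f ≫ g = 0 := (hE.ex1 f g h).1

lemma adm_isKer (hE : E.IsExact) {X Y Z : C} {f : X ⟶ Y} {g : Y ⟶ Z} (h : E.adm f g) :
    IsKer f g := (hE.ex1 f g h).2.1

lemma adm_isCoker (hE : E.IsExact) {X Y Z : C} {f : X ⟶ Y} {g : Y ⟶ Z} (h : E.adm f g) :
    IsCoker f g := (hE.ex1 f g h).2.2

lemma mono_of_isKer {X Y Z : C} {f : X ⟶ Y} {g : Y ⟶ Z} (h0 : f ≫ g = 0)
    (hk : IsKer f g) : Mono f := by
  refine ⟨fun {T} x y hxy => ?_⟩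
  have h := hk (x ≫ f) (by rw [Category.assoc, h0, comp_zero])
  exact (h.unique rfl hxy.symm)

lemma epi_of_isCoker {X Y Z : C} {f : X ⟶ Y} {g : Y ⟶ Z} (h0 : f ≫ g = 0)
    (hc : IsCoker f g) : Epi g := by
  refine ⟨fun {T} x y hxy => ?_⟩
  have h := hc (g ≫ x) (by rw [← Category.assoc, h0, zero_comp])
  exact (h.unique rfl hxy.symm)

lemma adm_mono (hE : E.IsExact) {X Y Z : C} {f : X ⟶ Y} {g : Y ⟶ Z} (h : E.adm f g) :
    Mono f := mono_of_isKer (adm_zero hE h) (adm_isKer hE h)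

lemma adm_epi (hE : E.IsExact) {X Y Z : C} {f : X ⟶ Y} {g : Y ⟶ Z} (h : E.adm f g) :
    Epi g := epi_of_isCoker (adm_zero hE h) (adm_isCoker hE h)

/-- Replace the kernel of an admissible triple by any other kernel. -/
lemma adm_ker_replace (hE : E.IsExact) {M X Y Z : C} {m : M ⟶ Y} {q : Y ⟶ Z}
    (hm : E.adm m q) {f : X ⟶ Y} (h0 : f ≫ q = 0) (hk : IsKer f q) : E.adm f q := by
  have hmono_m : Mono m := adm_mono hE hm
  have hmono_f : Mono f := mono_of_isKer h0 hk
  obtain ⟨k₁, hk₁, -⟩ := hk m (adm_zero hE hm)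
  obtain ⟨k₂, hk₂, -⟩ := adm_isKer hE hm f h0
  have h12 : k₁ ≫ k₂ = 𝟙 M := by
    have : (k₁ ≫ k₂) ≫ m = 𝟙 M ≫ m := by rw [Category.assoc, hk₂, hk₁, Category.id_comp]
    exact Mono.right_cancellation _ _ this
  have h21 : k₂ ≫ k₁ = 𝟙 X := by
    have : (k₂ ≫ k₁) ≫ f = 𝟙 X ≫ f := by rw [Category.assoc, hk₁, hk₂, Category.id_comp]
    exact Mono.right_cancellation _ _ this
  exact hE.ex0.2 m q f q ⟨k₁, k₂, h12, h21⟩ (Iso.refl Y) (Iso.refl Z) hm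
    (by simpa using hk₁.symm) (by simp)

/-- Replace the cokernel of an admissible triple by any other cokernel. -/
lemma adm_coker_replace (hE : E.IsExact) {X Y Z W : C} {f : X ⟶ Y} {q : Y ⟶ Z}
    (hf : E.adm f q) {g : Y ⟶ W} (h0 : f ≫ g = 0) (hc : IsCoker f g) : E.adm f g := by
  have hepi_q : Epi q := adm_epi hE hf
  have hepi_g : Epi g := epi_of_isCoker h0 hc
  obtain ⟨k₁, hk₁, -⟩ := adm_isCoker hE hf g h0
  obtain ⟨k₂, hk₂, -⟩ := hc q (adm_zero hE hf)
  have h12 : k₁ ≫ k₂ = 𝟙 Z := by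
    have : q ≫ k₁ ≫ k₂ = q ≫ 𝟙 Z := by
      rw [← Category.assoc, hk₁, hk₂, Category.comp_id]
    exact Epi.left_cancellation _ _ this
  have h21 : k₂ ≫ k₁ = 𝟙 W := by
    have : g ≫ k₂ ≫ k₁ = g ≫ 𝟙 W := by
      rw [← Category.assoc, hk₂, hk₁, Category.comp_id]
    exact Epi.left_cancellation _ _ this
  exact hE.ex0.2 f q f g (Iso.refl X) (Iso.refl Y) ⟨k₁, k₂, h12, h21⟩ hf (by simp)
    (by simpa using hk₁)

/-- The triple `0 ⟶ X ⟶ X` is admissible. -/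
lemma adm_zero_id (hE : E.IsExact) (X : C) : E.adm (0 : (0 : C) ⟶ X) (𝟙 X) := by
  obtain ⟨Y, f', u, g', hadm, hfu, hug⟩ := hE.ex2b (𝟙 (0 : C)) (𝟙 (0 : C)) hE.ex0.1 (0 : X ⟶ 0)
  have hcoker := adm_isCoker hE hadm
  obtain ⟨k, hk, -⟩ := hcoker (𝟙 Y) (by apply (Limits.isZero_zero C).eq_of_src)
  have hepi : Epi g' := adm_epi hE hadm
  have hgk : k ≫ g' = 𝟙 X := by
    have : g' ≫ k ≫ g' = g' ≫ 𝟙 X := by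
      rw [← Category.assoc, hk, Category.id_comp, Category.comp_id]
    exact Epi.left_cancellation _ _ this
  refine hE.ex0.2 f' g' (0 : (0:C) ⟶ X) (𝟙 X) (Iso.refl _) ⟨g', k, hk, hgk⟩ (Iso.refl X)
    hadm ?_ ?_
  · apply (Limits.isZero_zero C).eq_of_src
  · simp [hgk]

end ExAux
namespace ExAux

variable {C : Type u} [Category.{v} C] [Preadditive C] [HasZeroObject C]
variable {E : ExData C}

/-- The data produced by pushing out `0 ⟶ X ⟶ X` along `0 ⟶ Y`: a biproduct of `X` and `Y`
whose second inclusion/first projection form an admissible triple. -/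
lemma biprod_data (hE : E.IsExact) (X Y : C) :
    ∃ (b : BinaryBicone X Y), (b.fst ≫ b.inl + b.snd ≫ b.inr = 𝟙 b.pt) ∧
      E.adm b.inr b.fst := by
  obtain ⟨P, i, u, g', hadm, -, hug⟩ := hE.ex2a _ _ (adm_zero_id hE X) (0 : (0:C) ⟶ Y)
  have hmono_i : Mono i := adm_mono hE hadm
  have hig : i ≫ g' = 0 := adm_zero hE hadm
  -- construct the second projection
  obtain ⟨π, hπ, -⟩ := adm_isKer hE hadm (𝟙 P - g' ≫ u)
    (by rw [Preadditive.sub_comp, Category.id_comp, Category.assoc, hug, Category.comp_id,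
      sub_self])
  have hiπ : i ≫ π = 𝟙 Y := by
    have : (i ≫ π) ≫ i = 𝟙 Y ≫ i := by
      rw [Category.assoc, hπ, Preadditive.comp_sub, Category.comp_id, ← Category.assoc, hig,
        zero_comp, sub_zero, Category.id_comp]
    exact Mono.right_cancellation _ _ this
  have huπ : u ≫ π = 0 := by
    have : (u ≫ π) ≫ i = 0 ≫ i := by
      rw [Category.assoc, hπ, Preadditive.comp_sub, Category.comp_id, ← Category.assoc, hug,
        Category.id_comp, sub_self, zero_comp]
    exact Mono.right_cancellation _ _ this
  refine ⟨⟨P, g', π, u, i, hug, huπ, hig, hiπ⟩, ?_, hadm⟩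
  rw [hπ]; abel

lemma hasBinaryBiproducts (hE : E.IsExact) : HasBinaryBiproducts C := by
  refine ⟨fun X Y => ?_⟩
  obtain ⟨b, htotal, -⟩ := biprod_data hE X Y
  exact hasBinaryBiproduct_of_total b htotal

/-- The split triple `Y ⟶ X ⊞ Y ⟶ X` is admissible. -/
lemma adm_inr_fst (hE : E.IsExact) [HasBinaryBiproducts C] (X Y : C) :
    E.adm (biprod.inr : Y ⟶ X ⊞ Y) (biprod.fst : X ⊞ Y ⟶ X) := by
  obtain ⟨b, htotal, hadm⟩ := biprod_data hE X Y
  -- iso `b.pt ≅ X ⊞ Y`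
  have h1 : (biprod.lift b.fst b.snd : b.pt ⟶ X ⊞ Y) ≫ biprod.desc b.inl b.inr = 𝟙 b.pt := by
    rw [biprod.lift_desc]; exact htotal
  have h2 : (biprod.desc b.inl b.inr : X ⊞ Y ⟶ b.pt) ≫ biprod.lift b.fst b.snd = 𝟙 (X ⊞ Y) := by
    apply biprod.hom_ext' <;> apply biprod.hom_ext <;>
      simp [b.inl_fst, b.inl_snd, b.inr_fst, b.inr_snd]
  refine hE.ex0.2 b.inr b.fst _ _ (Iso.refl Y) ⟨biprod.lift b.fst b.snd, biprod.desc b.inl b.inr, h1, h2⟩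
    (Iso.refl X) hadm ?_ ?_
  · apply biprod.hom_ext <;> simp
  · simp

/-- The split triple `X ⟶ X ⊞ Y ⟶ Y` is admissible. -/
lemma adm_inl_snd (hE : E.IsExact) [HasBinaryBiproducts C] (X Y : C) :
    E.adm (biprod.inl : X ⟶ X ⊞ Y) (biprod.snd : X ⊞ Y ⟶ Y) := by
  refine hE.ex0.2 _ _ _ _ (Iso.refl X) (biprod.braiding Y X) (Iso.refl Y)
    (adm_inr_fst hE Y X) ?_ ?_
  · apply biprod.hom_ext <;> simp
  · apply biprod.hom_ext' <;> simp

end ExAux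
namespace ExAux

variable {C : Type u} [Category.{v} C] [Preadditive C] [HasZeroObject C]
variable {E : ExData C}

lemma adm_map_one (hE : E.IsExact) [HasBinaryBiproducts C] {A B Cc W : C} {f : A ⟶ B}
    {g : B ⟶ Cc} (h0 : f ≫ g = 0) (hk : IsKer f g)
    (hepi : E.AdmEpi (biprod.fst ≫ g : B ⊞ W ⟶ Cc)) :
    E.adm (biprod.map f (𝟙 W)) (biprod.fst ≫ g) := by
  obtain ⟨M, m, hm⟩ := hepi
  refine adm_ker_replace hE hm ?_ ?_
  · rw [← Category.assoc, biprod.map_fst, Category.assoc, h0, comp_zero]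
  · intro T h' hh
    obtain ⟨k₁, hk₁, huk₁⟩ := hk (h' ≫ biprod.fst)
      (by rw [Category.assoc]; rw [← Category.assoc] at hh ⊢; exact hh)
    refine ⟨biprod.lift k₁ (h' ≫ biprod.snd), ?_, ?_⟩
    · apply biprod.hom_ext
      · rw [Category.assoc, biprod.map_fst, ← Category.assoc, biprod.lift_fst, hk₁]
      · rw [Category.assoc, biprod.map_snd, ← Category.assoc, biprod.lift_snd,
          Category.comp_id]
    · intro y hy
      apply biprod.hom_ext
      · rw [biprod.lift_fst]
        refine huk₁ (y ≫ biprod.fst) ?_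
        show (y ≫ biprod.fst) ≫ f = h' ≫ biprod.fst
        rw [Category.assoc, ← biprod.map_fst (f := f) (g := 𝟙 W), ← Category.assoc, hy]
      · rw [biprod.lift_snd, ← hy, Category.assoc, biprod.map_snd, ← Category.assoc,
          Category.comp_id]

lemma adm_one_map (hE : E.IsExact) [HasBinaryBiproducts C] {A B Cc W : C} {f : A ⟶ B}
    {g : B ⟶ Cc} (h0 : f ≫ g = 0) (hk : IsKer f g)
    (hepi : E.AdmEpi (biprod.snd ≫ g : W ⊞ B ⟶ Cc)) :
    E.adm (biprod.map (𝟙 W) f) (biprod.snd ≫ g) := by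
  have hepi' : E.AdmEpi (biprod.fst ≫ g : B ⊞ W ⟶ Cc) := by
    obtain ⟨M, m, hm⟩ := hepi
    refine ⟨M, m ≫ (biprod.braiding W B).hom, ?_⟩
    refine hE.ex0.2 m (biprod.snd ≫ g) _ _ (Iso.refl M) (biprod.braiding W B) (Iso.refl Cc)
      hm (by simp) ?_
    rw [Iso.refl_hom, Category.comp_id, ← Category.assoc]
    congr 1
    simp [biprod.braiding]
  have h := adm_map_one hE h0 hk (W := W) hepi'
  refine hE.ex0.2 _ _ _ _ (biprod.braiding A W) (biprod.braiding B W) (Iso.refl Cc) h ?_ ?_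
  · apply biprod.hom_ext' <;> apply biprod.hom_ext <;> simp
  · apply biprod.hom_ext' <;> simp

/-- The direct sum of two admissible triples is admissible. -/
lemma adm_map (hE : E.IsExact) [HasBinaryBiproducts C] {A B Cc A' B' C' : C}
    {f : A ⟶ B} {g : B ⟶ Cc} {f' : A' ⟶ B'} {g' : B' ⟶ C'}
    (h : E.adm f g) (h' : E.adm f' g') :
    E.adm (biprod.map f f') (biprod.map g g') := by
  have hepi1 : E.AdmEpi (biprod.fst ≫ g : B ⊞ A' ⟶ Cc) :=
    hE.ex3b _ _ ⟨_, _, adm_inr_fst hE B A'⟩ ⟨_, _, h⟩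
  have hepi2 : E.AdmEpi (biprod.snd ≫ g' : B ⊞ B' ⟶ C') :=
    hE.ex3b _ _ ⟨_, _, adm_inl_snd hE B B'⟩ ⟨_, _, h'⟩
  have m1 := adm_map_one hE (adm_zero hE h) (adm_isKer hE h) (W := A') hepi1
  have m2 := adm_one_map hE (adm_zero hE h') (adm_isKer hE h') (W := B) hepi2
  have hcomp : biprod.map f f' = biprod.map f (𝟙 A') ≫ biprod.map (𝟙 B) f' := by
    apply biprod.hom_ext' <;> simp
  have hmono : E.AdmMono (biprod.map f f') := by
    rw [hcomp]; exact hE.ex3a _ _ ⟨_, _, m1⟩ ⟨_, _, m2⟩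
  obtain ⟨W, q, hq⟩ := hmono
  refine adm_coker_replace hE hq ?_ ?_
  · apply biprod.hom_ext'
    · rw [← Category.assoc, biprod.inl_map, Category.assoc, biprod.inl_map, ← Category.assoc,
        adm_zero hE h, zero_comp, comp_zero]
    · rw [← Category.assoc, biprod.inr_map, Category.assoc, biprod.inr_map, ← Category.assoc,
        adm_zero hE h', zero_comp, comp_zero]
  · intro T h'' hh
    obtain ⟨k₁, hk₁, huk₁⟩ := adm_isCoker hE h (biprod.inl ≫ h'')
      (by rw [← Category.assoc, ← biprod.inl_map f f', Category.assoc, hh, comp_zero])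
    obtain ⟨k₂, hk₂, huk₂⟩ := adm_isCoker hE h' (biprod.inr ≫ h'')
      (by rw [← Category.assoc, ← biprod.inr_map f f', Category.assoc, hh, comp_zero])
    refine ⟨biprod.desc k₁ k₂, ?_, ?_⟩
    · apply biprod.hom_ext'
      · rw [← Category.assoc, biprod.inl_map, Category.assoc, biprod.inl_desc, hk₁]
      · rw [← Category.assoc, biprod.inr_map, Category.assoc, biprod.inr_desc, hk₂]
    · intro y hy
      apply biprod.hom_ext'
      · rw [biprod.inl_desc]
        refine huk₁ (biprod.inl ≫ y) ?_
        show g ≫ biprod.inl ≫ y = biprod.inl ≫ h''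
        rw [← Category.assoc, ← biprod.inl_map g g', Category.assoc, hy]
      · rw [biprod.inr_desc]
        refine huk₂ (biprod.inr ≫ y) ?_
        show g' ≫ biprod.inr ≫ y = biprod.inr ≫ h''
        rw [← Category.assoc, ← biprod.inr_map g g', Category.assoc, hy]

end ExAux
namespace ExAux

variable {C : Type u} [Category.{v} C] [Preadditive C] [HasZeroObject C]
variable {E : ExData C}

/-- The square produced by axiom Ex2(a) is a pushout. -/
lemma pushout_prop (hE : E.IsExact) {X' X X'' Y' Y T : C} {f : X' ⟶ X} {g : X ⟶ X''}
    {t : X' ⟶ Y'} {i : Y' ⟶ Y} {u : X ⟶ Y} {g₂ : Y ⟶ X''}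
    (hfg : E.adm f g) (hi : E.adm i g₂) (h1 : t ≫ i = f ≫ u) (h2 : u ≫ g₂ = g)
    (v : X ⟶ T) (w : Y' ⟶ T) (hc : f ≫ v = t ≫ w) :
    ∃! z : Y ⟶ T, u ≫ z = v ∧ i ≫ z = w := by
  obtain ⟨R, n, ub, gh, hadmR, hwn, hug⟩ := hE.ex2a i g₂ hi w
  -- hwn : w ≫ n = i ≫ ub, hug : ub ≫ gh = g₂
  have hfz : f ≫ (u ≫ ub - v ≫ n) = 0 := by
    rw [Preadditive.comp_sub, ← Category.assoc, ← h1, Category.assoc, ← hwn,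
      ← Category.assoc, ← hc, Category.assoc, sub_self]
  obtain ⟨δ, hδ, -⟩ := adm_isCoker hE hfg (u ≫ ub - v ≫ n) hfz
  have hepi_g : Epi g := adm_epi hE hfg
  have hδgh : δ ≫ gh = 𝟙 X'' := by
    have : g ≫ δ ≫ gh = g ≫ 𝟙 X'' := by
      rw [← Category.assoc, hδ, Category.comp_id, Preadditive.sub_comp, Category.assoc,
        hug, h2, Category.assoc, adm_zero hE hadmR, comp_zero, sub_zero]
    exact Epi.left_cancellation _ _ this
  have hmono_n : Mono n := adm_mono hE hadmR
  obtain ⟨rh, hrh, -⟩ := adm_isKer hE hadmR (𝟙 R - gh ≫ δ)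
    (by rw [Preadditive.sub_comp, Category.id_comp, Category.assoc, hδgh, Category.comp_id,
      sub_self])
  have hnr : n ≫ rh = 𝟙 T := by
    have : (n ≫ rh) ≫ n = 𝟙 T ≫ n := by
      rw [Category.assoc, hrh, Preadditive.comp_sub, Category.comp_id, ← Category.assoc,
        adm_zero hE hadmR, zero_comp, sub_zero, Category.id_comp]
    exact Mono.right_cancellation _ _ this
  refine ⟨(ub - g₂ ≫ δ) ≫ rh, ⟨?_, ?_⟩, ?_⟩
  · rw [← Category.assoc, Preadditive.comp_sub, ← Category.assoc u g₂, h2, hδ, sub_sub_cancel,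
      Category.assoc, hnr, Category.comp_id]
  · rw [← Category.assoc, Preadditive.comp_sub, ← Category.assoc i g₂, adm_zero hE hi,
      zero_comp, sub_zero, hwn.symm, Category.assoc, hnr, Category.comp_id]
  · rintro y ⟨hy1, hy2⟩
    have key : ∀ d : Y ⟶ T, u ≫ d = 0 → i ≫ d = 0 → d = 0 := by
      intro d hud hid
      obtain ⟨db, hdb, -⟩ := adm_isCoker hE hi d hid
      have : g ≫ db = 0 := by rw [← h2, Category.assoc, hdb, hud]
      have hdb0 : db = 0 := by
        apply Epi.left_cancellation (f := g) _ _
        rw [this, comp_zero]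
      rw [← hdb, hdb0, comp_zero]
    have := key (y - (ub - g₂ ≫ δ) ≫ rh) ?_ ?_
    · exact sub_eq_zero.mp this
    · rw [Preadditive.comp_sub, hy1, ← Category.assoc, Preadditive.comp_sub,
        ← Category.assoc u g₂, h2, hδ, sub_sub_cancel, Category.assoc, hnr,
        Category.comp_id, sub_self]
    · rw [Preadditive.comp_sub, hy2, ← Category.assoc, Preadditive.comp_sub,
        ← Category.assoc i g₂, adm_zero hE hi, zero_comp, sub_zero, hwn.symm,
        Category.assoc, hnr, Category.comp_id, sub_self]

/-- A kernel–cokernel pair which is a direct summand of an admissible triple is admissible. -/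
lemma adm_of_summand (hE : E.IsExact) [HasBinaryBiproducts C] {A B Cc A' B' C' : C}
    {f : A ⟶ B} {g : B ⟶ Cc} {f' : A' ⟶ B'} {g' : B' ⟶ C'}
    (h0 : f ≫ g = 0) (hk : IsKer f g)
    (hsum : E.adm (biprod.map f f') (biprod.map g g')) : E.adm f g := by
  have hepi : E.AdmEpi (biprod.fst ≫ g : B ⊞ B' ⟶ Cc) := by
    have := hE.ex3b _ _ (⟨_, _, hsum⟩ : E.AdmEpi (biprod.map g g'))
      (⟨_, _, adm_inr_fst hE Cc C'⟩ : E.AdmEpi (biprod.fst : Cc ⊞ C' ⟶ Cc))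
    rwa [biprod.map_fst] at this
  have hK : E.adm (biprod.map f (𝟙 B')) (biprod.fst ≫ g) := adm_map_one hE h0 hk hepi
  obtain ⟨Y, i, u, g₂, hadm2, h1, h2⟩ := hE.ex2a _ _ hK (biprod.fst : A ⊞ B' ⟶ A)
  -- h1 : fst ≫ i = map f 𝟙 ≫ u, h2 : u ≫ g₂ = fst ≫ g
  obtain ⟨z, ⟨hz1, hz2⟩, -⟩ := pushout_prop hE hK hadm2 h1 h2 (biprod.fst : B ⊞ B' ⟶ B) f
    (by rw [biprod.map_fst])
  -- hz1 : u ≫ z = fst, hz2 : i ≫ z = f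
  have hinru : (biprod.inr : B' ⟶ B ⊞ B') ≫ u = 0 := by
    have h3 : (biprod.inr : B' ⟶ A ⊞ B') ≫ biprod.map f (𝟙 B') ≫ u = 0 := by
      rw [← h1, ← Category.assoc, biprod.inr_fst, zero_comp]
    rwa [← Category.assoc, biprod.inr_map, Category.id_comp] at h3
  have htot : (biprod.fst ≫ biprod.inl : B ⊞ B' ⟶ _) ≫ u = u := by
    have h4 : (biprod.fst ≫ biprod.inl + biprod.snd ≫ biprod.inr : B ⊞ B' ⟶ B ⊞ B') ≫ u
        = 𝟙 _ ≫ u := by rw [biprod.total]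
    rw [Preadditive.add_comp] at h4
    simp only [Category.assoc] at h4
    rw [hinru, comp_zero, add_zero, Category.id_comp] at h4
    rw [Category.assoc]
    exact h4
  set b : B ⟶ Y := biprod.inl ≫ u with hb
  have hbz : b ≫ z = 𝟙 B := by rw [hb, Category.assoc, hz1, biprod.inl_fst]
  have hzb : z ≫ b = 𝟙 Y := by
    obtain ⟨z', hz', huz'⟩ := pushout_prop hE hK hadm2 h1 h2 u i h1.symm
    have e1 : u ≫ z ≫ b = u := by
      rw [← Category.assoc, hz1, hb, ← Category.assoc, htot]
    have e2 : i ≫ z ≫ b = i := by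
      rw [← Category.assoc, hz2, hb, ← Category.assoc, ← biprod.inl_map f (𝟙 B'),
        Category.assoc, h1.symm, ← Category.assoc, biprod.inl_fst, Category.id_comp]
    have q1 := huz' (z ≫ b) ⟨e1, e2⟩
    have q2 := huz' (𝟙 Y) ⟨Category.comp_id u, Category.comp_id i⟩
    rw [q1, q2]
  have hiso : IsIso b := ⟨⟨z, hbz, hzb⟩⟩
  have hepifst : Epi (biprod.fst : B ⊞ B' ⟶ B) := epi_of_epi_fac biprod.inl_fst
  have hepiu : Epi u := by
    have : u = biprod.fst ≫ b := by
      rw [← hz1, Category.assoc, hzb, Category.comp_id]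
    rw [this]; exact epi_comp _ _
  have hg₂ : g₂ = z ≫ g := by
    apply Epi.left_cancellation (f := u)
    rw [h2, ← Category.assoc, hz1]
  exact hE.ex0.2 i g₂ f g (Iso.refl A) ⟨z, b, hzb, hbz⟩ (Iso.refl Cc) hadm2
    (by rw [hz2, Iso.refl_hom, Category.id_comp])
    (by rw [Iso.refl_hom, Category.comp_id, hg₂])

end ExAux
namespace ExAux

variable {C : Type u} [Category.{v} C] [Preadditive C] [HasZeroObject C]
variable {E : ExData C}

/-- The zero complex is exact. -/
lemma isExact_zeroCpx (hE : E.IsExact) :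
    IsExactCpx E (CochainComplex.of (fun _ : ℤ => (0 : C)) (fun _ => 0)
      (fun _ => by simp)) := by
  refine ⟨fun _ => (0 : C), fun _ => 0, fun _ => 0, fun i => ?_, fun i => ?_⟩
  · have h := hE.ex0.1
    have e1 : (𝟙 (0 : C)) = (0 : (0 : C) ⟶ (0 : C)) := Limits.id_zero
    rw [e1] at h
    exact h
  · exact (CochainComplex.of_d (fun _ : ℤ => (0 : C)) (fun _ => 0) i).trans zero_comp.symm

lemma idem_complete_of_acyclic_exact (hE : E.IsExact)
    (H : ∀ K : CochainComplex C ℤ, IsAcyclicCpx E K → IsExactCpx E K) :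
    IsIdempotentComplete C := by
  refine ⟨fun A e he => ?_⟩
  set d : ∀ _ : ℤ, A ⟶ A := fun n => if Even n then e else 𝟙 A - e with hd_def
  have hsq : ∀ n : ℤ, d n ≫ d (n + 1) = 0 := by
    intro n
    by_cases h : Even n
    · have h' : ¬Even (n + 1) := by simp [Int.even_add_one, h]
      simp only [hd_def, if_pos h, if_neg h', Preadditive.comp_sub, Category.comp_id, he,
        sub_self]
    · have h' : Even (n + 1) := Int.even_add_one.mpr h
      simp only [hd_def, if_neg h, if_pos h', Preadditive.sub_comp, Category.id_comp, he,
        sub_self]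
  set K : CochainComplex C ℤ := CochainComplex.of (fun _ => A) d hsq with hKdef
  have hzero : Homotopy (0 : K ⟶ K) (𝟙 K) := by
    refine ⟨fun i j => if h : j + 1 = i then -𝟙 A else 0, ?_, ?_⟩
    · intro i j hrel
      exact dif_neg hrel
    · intro i
      obtain ⟨n, rfl⟩ : ∃ n : ℤ, i = n + 1 := ⟨i - 1, by omega⟩
      rw [dNext_eq _ (show (ComplexShape.up ℤ).Rel (n+1) (n+1+1) from rfl),
        prevD_eq _ (show (ComplexShape.up ℤ).Rel n (n+1) from rfl)]
      rw [HomologicalComplex.zero_f, HomologicalComplex.id_f, dif_pos rfl, dif_pos rfl]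
      have h1 : K.d (n+1) (n+1+1) = d (n+1) := CochainComplex.of_d _ d (n+1)
      have h2 : K.d n (n+1) = d n := CochainComplex.of_d _ d n
      rw [h1, h2]
      show (0 : A ⟶ A) = d (n+1) ≫ (-𝟙 A) + (-𝟙 A) ≫ d n + 𝟙 A
      have hsum : d n + d (n + 1) = 𝟙 A := by
        by_cases h : Even n
        · have h' : ¬Even (n + 1) := by simp [Int.even_add_one, h]
          simp only [hd_def, if_pos h, if_neg h']; abel
        · have h' : Even (n + 1) := Int.even_add_one.mpr h
          simp only [hd_def, if_neg h, if_pos h']; abel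
      rw [Preadditive.comp_neg, Preadditive.neg_comp, Category.comp_id, Category.id_comp,
        ← hsum]
      abel
  have hac : IsAcyclicCpx E K := by
    refine ⟨_, isExact_zeroCpx hE, ⟨⟨0, 0, (Homotopy.ofEq (by simp)).trans hzero,
      Homotopy.ofEq ?_⟩⟩⟩
    apply HomologicalComplex.hom_ext
    intro i
    exact (Limits.isZero_zero C).eq_of_src _ _
  obtain ⟨Z, p, j, hadm, hd⟩ := H K hac
  -- extract the splitting of `e` at degree 0
  have hd0 : K.d 0 (0 + 1) = p 0 ≫ j (0 + 1) := hd 0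
  have hofd0 : K.d 0 (0 + 1) = e := by
    rw [show K.d 0 (0 + 1) = d 0 from CochainComplex.of_d _ d 0]
    simp [hd_def]
  have hdm1 := hd (-1)
  have hofdm1 : K.d (-1) ((-1) + 1) = 𝟙 A - e := by
    rw [show K.d (-1) ((-1) + 1) = d (-1) from CochainComplex.of_d _ d (-1)]
    norm_num [hd_def, Int.even_iff]
  have hj0p : (j (-1 + 1) ≫ p 0 : Z (-1 + 1) ⟶ Z (0 + 1)) = 0 := adm_zero hE (hadm 0)
  have hsub : (𝟙 A - e) ≫ p 0 = 0 := by
    rw [← hofdm1, hdm1, Category.assoc, hj0p, comp_zero]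
  have hep : e ≫ p 0 = p 0 := by
    rw [Preadditive.sub_comp, Category.id_comp, sub_eq_zero] at hsub
    exact hsub.symm
  have hepi : Epi (p 0) := adm_epi hE (hadm 0)
  have hpj : p 0 ≫ j (0 + 1) = e := by rw [← hd0, hofd0]
  refine ⟨Z (0 + 1), j (0 + 1), p 0, ?_, hpj⟩
  have : p 0 ≫ j (0 + 1) ≫ p 0 = p 0 ≫ 𝟙 (Z (0 + 1)) := by
    rw [Category.comp_id, ← Category.assoc, hpj, hep]
  exact Epi.left_cancellation _ _ this

end ExAux
namespace ExAux

variable {C : Type u} [Category.{v} C] [Preadditive C] [HasZeroObject C]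
variable {E : ExData C}

lemma isExactCpx_of_acyclic (hE : E.IsExact) (hIC : IsIdempotentComplete C)
    (K : CochainComplex C ℤ) (hK : IsAcyclicCpx E K) : IsExactCpx E K := by
  haveI : HasBinaryBiproducts C := hasBinaryBiproducts hE
  obtain ⟨L, ⟨ZL, pL, jL, hadmL, hdL⟩, ⟨eqv⟩⟩ := hK
  set H : Homotopy (eqv.hom ≫ eqv.inv) (𝟙 K) := eqv.homotopyHomInvId with hHdef
  set NX : ℤ → C := fun n => L.X n ⊞ (K.X (n + 1) ⊞ K.X n) with hNX
  set Nd : ∀ n : ℤ, NX n ⟶ NX (n + 1) :=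
    fun n => biprod.map (L.d n (n + 1)) (biprod.fst ≫ biprod.inr) with hNd
  set ZN : ℤ → C := fun n => ZL n ⊞ K.X n with hZN
  set pN : ∀ n : ℤ, NX n ⟶ ZN (n + 1) := fun n => biprod.map (pL n) biprod.fst with hpN
  set jN : ∀ n : ℤ, ZN n ⟶ NX n := fun n => biprod.map (jL n) biprod.inr with hjN
  have hadmN : ∀ n, E.adm (jN n) (pN n) := fun n =>
    adm_map hE (hadmL n) (adm_inr_fst hE (K.X (n + 1)) (K.X n))
  have hdN : ∀ n, Nd n = pN n ≫ jN (n + 1) := by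
    intro n
    simp only [hNd, hpN, hjN]
    apply biprod.hom_ext' <;> apply biprod.hom_ext <;>
      simp [hdL n]
  set sf : ∀ n : ℤ, K.X n ⟶ NX n :=
    fun n => biprod.lift (eqv.hom.f n) (biprod.lift (K.d n (n + 1)) (𝟙 (K.X n))) with hsf
  set rf : ∀ n : ℤ, NX n ⟶ K.X n :=
    fun n => biprod.desc (eqv.inv.f n)
      (biprod.desc (-H.hom (n + 1) n) (-prevD n H.hom)) with hrf
  have hscomm : ∀ n, sf n ≫ Nd n = K.d n (n + 1) ≫ sf (n + 1) := by
    intro n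
    simp only [hsf, hNd]
    apply biprod.hom_ext
    · simp [eqv.hom.comm]
    · apply biprod.hom_ext <;> simp
  have hrcomm : ∀ n, rf n ≫ K.d n (n + 1) = Nd n ≫ rf (n + 1) := by
    intro n
    simp only [hrf, hNd]
    apply biprod.hom_ext'
    · simp [eqv.inv.comm]
    · apply biprod.hom_ext'
      · rw [prevD_eq H.hom (show (ComplexShape.up ℤ).Rel n (n + 1) from rfl)]
        simp
      · rw [prevD_eq H.hom (show (ComplexShape.up ℤ).Rel (n - 1) n from by
          show n - 1 + 1 = n; omega)]
        simp
  have hsr : ∀ n, sf n ≫ rf n = 𝟙 (K.X n) := by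
    intro n
    simp only [hsf, hrf, biprod.lift_desc]
    have hcm := H.comm n
    rw [HomologicalComplex.comp_f, HomologicalComplex.id_f,
      dNext_eq H.hom (show (ComplexShape.up ℤ).Rel n (n + 1) from rfl)] at hcm
    rw [hcm]
    simp only [Preadditive.comp_neg, Preadditive.neg_comp, Category.id_comp,
      Preadditive.comp_add]
    abel
  -- reassociated helper identities
  have hsr2 : ∀ n, ∀ {T : C} (x : K.X n ⟶ T), sf n ≫ rf n ≫ x = x := by
    intro n T x; rw [← Category.assoc, hsr n, Category.id_comp]
  have hjp0 : ∀ n, jN n ≫ pN n = 0 := fun n => adm_zero hE (hadmN n)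
  have hjp02 : ∀ n, ∀ {T : C} (x : ZN (n + 1) ⟶ T), jN n ≫ pN n ≫ x = 0 := by
    intro n T x; rw [← Category.assoc, hjp0 n, zero_comp]
  have hecomm : ∀ n, rf n ≫ sf n ≫ Nd n = Nd n ≫ rf (n + 1) ≫ sf (n + 1) := by
    intro n
    rw [hscomm n, ← Category.assoc, hrcomm n, Category.assoc]
  have hmonoJ : ∀ n, Mono (jN n) := fun n => adm_mono hE (hadmN n)
  have hεex : ∀ n, ∃ εn : ZN n ⟶ ZN n, εn ≫ jN n = jN n ≫ rf n ≫ sf n := by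
    intro n
    haveI := hmonoJ (n + 1)
    have h1 : (jN n ≫ rf n ≫ sf n) ≫ pN n = 0 := by
      rw [← cancel_mono (jN (n + 1))]
      simp only [Category.assoc, zero_comp]
      rw [← hdN n, hecomm n, hdN n]
      simp only [← Category.assoc]
      rw [hjp0 n]
      simp
    obtain ⟨k, hk, -⟩ := adm_isKer hE (hadmN n) (jN n ≫ rf n ≫ sf n) h1
    exact ⟨k, by rw [hk]⟩
  choose ε hε using hεex
  have hε2 : ∀ n, ∀ {T : C} (x : NX n ⟶ T), jN n ≫ rf n ≫ sf n ≫ x = ε n ≫ jN n ≫ x := by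
    intro n T x
    simp only [← Category.assoc]
    rw [hε n]
    simp only [Category.assoc]
  have hεidem : ∀ n, ε n ≫ ε n = ε n := by
    intro n
    haveI := hmonoJ n
    rw [← cancel_mono (jN n)]
    rw [Category.assoc, hε n, ← Category.assoc, hε n]
    simp only [Category.assoc]
    rw [hsr2 n]
  have hεP : ∀ n, rf n ≫ sf n ≫ pN n = pN n ≫ ε (n + 1) := by
    intro n
    haveI := hmonoJ (n + 1)
    rw [← cancel_mono (jN (n + 1))]
    simp only [Category.assoc]
    rw [hε (n + 1), ← hdN n, hecomm n, hdN n]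
    simp only [Category.assoc]
  have hεP2 : ∀ n, ∀ {T : C} (x : ZN (n + 1) ⟶ T),
      rf n ≫ sf n ≫ pN n ≫ x = pN n ≫ ε (n + 1) ≫ x := by
    intro n T x
    simp only [← Category.assoc]
    rw [Category.assoc (rf n) (sf n) (pN n), hεP n]
  -- idempotent splittings
  have hεcidem : ∀ n, (𝟙 (ZN n) - ε n) ≫ (𝟙 (ZN n) - ε n) = 𝟙 (ZN n) - ε n := by
    intro n
    simp only [Preadditive.sub_comp, Preadditive.comp_sub, Category.id_comp,
      Category.comp_id, hεidem n]
    abel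
  have heidem : ∀ n, (𝟙 (NX n) - rf n ≫ sf n) ≫ (𝟙 (NX n) - rf n ≫ sf n)
      = 𝟙 (NX n) - rf n ≫ sf n := by
    intro n
    have h2 : (rf n ≫ sf n) ≫ rf n ≫ sf n = rf n ≫ sf n := by
      rw [Category.assoc, hsr2 n]
    simp only [Preadditive.sub_comp, Preadditive.comp_sub, Category.id_comp,
      Category.comp_id, h2]
    abel
  obtain ⟨W, ι, ρ, hιρ, hρι⟩ :
      ∃ (W : ℤ → C) (ι : ∀ n, W n ⟶ ZN n) (ρ : ∀ n, ZN n ⟶ W n),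
        (∀ n, ι n ≫ ρ n = 𝟙 (W n)) ∧ (∀ n, ρ n ≫ ι n = ε n) := by
    have h := fun n => hIC.idempotents_split (ZN n) (ε n) (hεidem n)
    choose W ι ρ h1 h2 using h
    exact ⟨W, ι, ρ, h1, h2⟩
  obtain ⟨W', ι', ρ', hι'ρ', hρ'ι'⟩ :
      ∃ (W' : ℤ → C) (ι' : ∀ n, W' n ⟶ ZN n) (ρ' : ∀ n, ZN n ⟶ W' n),
        (∀ n, ι' n ≫ ρ' n = 𝟙 (W' n)) ∧ (∀ n, ρ' n ≫ ι' n = 𝟙 (ZN n) - ε n) := by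
    have h := fun n => hIC.idempotents_split (ZN n) (𝟙 (ZN n) - ε n) (hεcidem n)
    choose W ι ρ h1 h2 using h
    exact ⟨W, ι, ρ, h1, h2⟩
  obtain ⟨K', σ, τ, hστ, hτσ⟩ :
      ∃ (K' : ℤ → C) (σ : ∀ n, K' n ⟶ NX n) (τ : ∀ n, NX n ⟶ K' n),
        (∀ n, σ n ≫ τ n = 𝟙 (K' n)) ∧ (∀ n, τ n ≫ σ n = 𝟙 (NX n) - rf n ≫ sf n) := by
    have h := fun n => hIC.idempotents_split (NX n) (𝟙 (NX n) - rf n ≫ sf n) (heidem n)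
    choose W ι ρ h1 h2 using h
    exact ⟨W, ι, ρ, h1, h2⟩
  have hmonoι : ∀ n, Mono (ι n) := fun n => mono_of_mono_fac (hιρ n)
  have hmonoι' : ∀ n, Mono (ι' n) := fun n => mono_of_mono_fac (hι'ρ' n)
  have hmonoσ : ∀ n, Mono (σ n) := fun n => mono_of_mono_fac (hστ n)
  have hmonosf : ∀ n, Mono (sf n) := fun n => mono_of_mono_fac (hsr n)
  -- orthogonality
  have hιε : ∀ n, ι n ≫ ε n = ι n := by
    intro n; rw [← hρι n, ← Category.assoc, hιρ n, Category.id_comp]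
  have hι'ε : ∀ n, ι' n ≫ ε n = 0 := by
    intro n
    have h1 : ι' n ≫ (𝟙 (ZN n) - ε n) = ι' n := by
      rw [← hρ'ι' n, ← Category.assoc, hι'ρ' n, Category.id_comp]
    rw [Preadditive.comp_sub, Category.comp_id] at h1
    exact sub_eq_self.mp h1
  have hερ : ∀ n, ε n ≫ ρ n = ρ n := by
    intro n; rw [← hρι n, Category.assoc, hιρ n, Category.comp_id]
  have hιρ' : ∀ n, ι n ≫ ρ' n = 0 := by
    intro n
    haveI := hmonoι' n
    rw [← cancel_mono (ι' n), Category.assoc, hρ'ι' n, Preadditive.comp_sub,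
      Category.comp_id, hιε n, sub_self, zero_comp]
  have hι'ρ : ∀ n, ι' n ≫ ρ n = 0 := by
    intro n
    haveI := hmonoι n
    rw [← cancel_mono (ι n), Category.assoc, hρι n, hι'ε n, zero_comp]
  have hερ' : ∀ n, ε n ≫ ρ' n = 0 := by
    intro n; rw [← hρι n, Category.assoc, hιρ' n, comp_zero]
  have hsτ : ∀ n, sf n ≫ τ n = 0 := by
    intro n
    haveI := hmonoσ n
    rw [← cancel_mono (σ n), Category.assoc, hτσ n, Preadditive.comp_sub,
      Category.comp_id, ← Category.assoc, hsr n, Category.id_comp, sub_self, zero_comp]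
  have hσrf : ∀ n, σ n ≫ rf n = 0 := by
    intro n
    haveI := hmonosf n
    rw [← cancel_mono (sf n), Category.assoc, zero_comp]
    have h1 : σ n ≫ (𝟙 (NX n) - rf n ≫ sf n) = σ n := by
      rw [← hτσ n, ← Category.assoc, hστ n, Category.id_comp]
    rw [Preadditive.comp_sub, Category.comp_id] at h1
    exact sub_eq_zero.mpr (sub_eq_self.mp h1).symm ▸ (sub_eq_self.mp h1)
  set jK : ∀ n : ℤ, W n ⟶ K.X n := fun n => ι n ≫ jN n ≫ rf n with hjK
  set pK : ∀ n : ℤ, K.X n ⟶ W (n + 1) := fun n => sf n ≫ pN n ≫ ρ (n + 1) with hpK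
  set jK' : ∀ n : ℤ, W' n ⟶ K' n := fun n => ι' n ≫ jN n ≫ τ n with hjK'
  set pK' : ∀ n : ℤ, K' n ⟶ W' (n + 1) := fun n => σ n ≫ pN n ≫ ρ' (n + 1) with hpK'
  -- the differential decomposes
  have hdK : ∀ n, K.d n (n + 1) = pK n ≫ jK (n + 1) := by
    intro n
    rw [hpK, hjK]
    simp only [Category.assoc]
    rw [show ρ (n+1) ≫ ι (n+1) ≫ jN (n+1) ≫ rf (n+1)
        = ε (n+1) ≫ jN (n+1) ≫ rf (n+1) from by
      rw [← Category.assoc, ← Category.assoc, hρι (n+1)]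
      simp only [Category.assoc]]
    rw [show ε (n+1) ≫ jN (n+1) ≫ rf (n+1)
        = jN (n+1) ≫ rf (n+1) ≫ sf (n+1) ≫ rf (n+1) from by
      rw [← Category.assoc, hε (n+1)]; simp only [Category.assoc]]
    rw [hsr (n+1), Category.comp_id, ← Category.assoc (pN n), ← hdN n, ← hrcomm n,
      ← Category.assoc, hsr n, Category.id_comp]
  -- the isomorphisms
  have hIsoZ : ∀ n, (biprod.lift (ρ n) (ρ' n) : ZN n ⟶ W n ⊞ W' n)
      ≫ biprod.desc (ι n) (ι' n) = 𝟙 (ZN n) := by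
    intro n
    rw [biprod.lift_desc, hρι n, hρ'ι' n]
    abel
  have hIsoZ' : ∀ n, (biprod.desc (ι n) (ι' n) : W n ⊞ W' n ⟶ ZN n)
      ≫ biprod.lift (ρ n) (ρ' n) = 𝟙 (W n ⊞ W' n) := by
    intro n
    apply biprod.hom_ext' <;> apply biprod.hom_ext <;>
      simp [hιρ n, hι'ρ' n, hιρ' n, hι'ρ n]
  have hIsoN : ∀ n, (biprod.lift (rf n) (τ n) : NX n ⟶ K.X n ⊞ K' n)
      ≫ biprod.desc (sf n) (σ n) = 𝟙 (NX n) := by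
    intro n
    rw [biprod.lift_desc, hτσ n]
    abel
  have hIsoN' : ∀ n, (biprod.desc (sf n) (σ n) : K.X n ⊞ K' n ⟶ NX n)
      ≫ biprod.lift (rf n) (τ n) = 𝟙 (K.X n ⊞ K' n) := by
    intro n
    apply biprod.hom_ext' <;> apply biprod.hom_ext <;>
      simp [hsr n, hστ n, hsτ n, hσrf n]
  have hadmSum : ∀ n, E.adm (biprod.map (jK n) (jK' n)) (biprod.map (pK n) (pK' n)) := by
    intro n
    refine hE.ex0.2 (jN n) (pN n) _ _
      ⟨biprod.lift (ρ n) (ρ' n), biprod.desc (ι n) (ι' n), hIsoZ n, hIsoZ' n⟩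
      ⟨biprod.lift (rf n) (τ n), biprod.desc (sf n) (σ n), hIsoN n, hIsoN' n⟩
      ⟨biprod.lift (ρ (n+1)) (ρ' (n+1)), biprod.desc (ι (n+1)) (ι' (n+1)),
        hIsoZ (n+1), hIsoZ' (n+1)⟩
      (hadmN n) ?_ ?_
    · apply biprod.hom_ext
      · rw [Category.assoc, biprod.lift_fst, Category.assoc, biprod.map_fst,
          ← Category.assoc, biprod.lift_fst, hjK]
        rw [show ρ n ≫ ι n ≫ jN n ≫ rf n = ε n ≫ jN n ≫ rf n from by
          rw [← Category.assoc, ← Category.assoc, hρι n]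
          simp only [Category.assoc]]
        rw [← hε2 n (rf n), hsr n, Category.comp_id]
      · rw [Category.assoc, biprod.lift_snd, Category.assoc, biprod.map_snd,
          ← Category.assoc, biprod.lift_snd, hjK']
        rw [show ρ' n ≫ ι' n ≫ jN n ≫ τ n = (𝟙 (ZN n) - ε n) ≫ jN n ≫ τ n from by
          rw [← Category.assoc, ← Category.assoc, hρ'ι' n]
          simp only [Category.assoc]]
        rw [Preadditive.sub_comp, Category.id_comp, ← hε2 n (τ n), hsτ n, comp_zero,
          comp_zero, sub_zero]
    · apply biprod.hom_ext
      · rw [Category.assoc, biprod.lift_fst, Category.assoc, biprod.map_fst,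
          ← Category.assoc, biprod.lift_fst, hpK]
        rw [hεP2 n (ρ (n + 1)), hερ (n + 1)]
      · rw [Category.assoc, biprod.lift_snd, Category.assoc, biprod.map_snd,
          ← Category.assoc, biprod.lift_snd, hpK']
        rw [show τ n ≫ σ n ≫ pN n ≫ ρ' (n + 1)
            = (𝟙 (NX n) - rf n ≫ sf n) ≫ pN n ≫ ρ' (n + 1) from by
          rw [← Category.assoc, hτσ n]]
        rw [Preadditive.sub_comp, Category.id_comp, Category.assoc, hεP2 n (ρ' (n + 1)),
          hερ' (n + 1), comp_zero, sub_zero]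
  -- kernel–cokernel facts for the summand
  have h0K : ∀ n, jK n ≫ pK n = 0 := by
    intro n
    rw [hjK, hpK]
    simp only [Category.assoc]
    rw [show rf n ≫ sf n ≫ pN n ≫ ρ (n + 1) = pN n ≫ ε (n + 1) ≫ ρ (n + 1) from
      hεP2 n (ρ (n + 1))]
    rw [hjp02 n]
    simp
  have hJK0 : ∀ n, ∀ {T : C} (x : T ⟶ W n), x ≫ jK n = 0 → x = 0 := by
    intro n T x hx
    haveI := hmonoι n
    haveI := hmonoJ n
    rw [hjK] at hx
    simp only [Category.assoc] at hx
    have h1 : x ≫ ι n ≫ jN n ≫ rf n ≫ sf n = 0 := by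
      simp only [← Category.assoc]
      simp only [← Category.assoc] at hx
      rw [hx, zero_comp]
    rw [← hε n] at h1
    rw [← Category.assoc (ι n) (ε n) (jN n), hιε n, ← Category.assoc] at h1
    have h2 : x ≫ ι n = 0 := by
      rw [← cancel_mono (jN n), zero_comp]
      exact h1
    rw [← cancel_mono (ι n), zero_comp]
    exact h2
  have hmonoJK : ∀ n, Mono (jK n) := by
    intro n
    constructor
    intro T a b hab
    have h := hJK0 n (a - b) (by rw [Preadditive.sub_comp, hab, sub_self])
    exact sub_eq_zero.mp h
  have hkerK : ∀ n, IsKer (jK n) (pK n) := by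
    intro n
    intro T h hh
    have e1 : sf n ≫ pN n ≫ ε (n + 1) = sf n ≫ pN n := by
      rw [← hεP n, hsr2 n]
    have hh' : h ≫ sf n ≫ pN n ≫ ρ (n + 1) = 0 := by
      rw [hpK] at hh
      simpa only [Category.assoc] using hh
    have hh1 : h ≫ sf n ≫ pN n = 0 := by
      have h3 : h ≫ sf n ≫ pN n ≫ ε (n + 1) = 0 := by
        rw [show ε (n + 1) = ρ (n + 1) ≫ ι (n + 1) from (hρι (n + 1)).symm]
        simp only [← Category.assoc]
        simp only [← Category.assoc] at hh'
        rw [hh', zero_comp]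
      rw [e1] at h3
      exact h3
    obtain ⟨k, hk, -⟩ := adm_isKer hE (hadmN n) (h ≫ sf n)
      (by rw [Category.assoc]; exact hh1)
    have hkε : k ≫ ε n = k := by
      haveI := hmonoJ n
      rw [← cancel_mono (jN n), Category.assoc, hε n, ← Category.assoc, hk]
      simp only [Category.assoc]
      rw [hsr2 n]
    have hfac : (k ≫ ρ n) ≫ jK n = h := by
      rw [hjK]
      simp only [Category.assoc]
      rw [show ρ n ≫ ι n ≫ jN n ≫ rf n = ε n ≫ jN n ≫ rf n from by
        rw [← Category.assoc, ← Category.assoc, hρι n]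
        simp only [Category.assoc]]
      rw [← Category.assoc, hkε, ← Category.assoc, hk]
      simp only [Category.assoc]
      rw [hsr n, Category.comp_id]
    refine ⟨k ≫ ρ n, hfac, fun y hy => ?_⟩
    have h4 := hJK0 n (y - k ≫ ρ n) (by rw [Preadditive.sub_comp, hy, hfac, sub_self])
    exact sub_eq_zero.mp h4
  exact ⟨W, pK, jK, fun n => adm_of_summand hE (h0K n) (hkerK n) (hadmSum n), hdK⟩

end ExAux

/-- An exact category `E` is idempotent complete if and only if every acyclic complex
over `E` is exact. -/
theorem stmt_4 (E : ExData C) (hE : E.IsExact) :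
    IsIdempotentComplete C ↔
      ∀ K : CochainComplex C ℤ, IsAcyclicCpx E K → IsExactCpx E K := by
  constructor
  · intro hIC K hK
    exact ExAux.isExactCpx_of_acyclic hE hIC K hK
  · intro H
    exact ExAux.idem_complete_of_acyclic_exact hE H
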